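/- For all integers k ≥ 2 and all integers Γ with 0 ≤ Γ ≤ ⌊k/2⌋, the maximum of 2k/(2k − Γ) and (3k + Γ − ((k − Γ) mod 2))/(2k + 2Γ) is at least (3/4 + √33/12) − 1/(2k). -/

import Mathlib

theorem stmt_18 (k Γ : ℤ) (hk : 2 ≤ k) (h0 : 0 ≤ Γ) (hΓ : Γ ≤ k / 2) :
    (3 / 4 + Real.sqrt 33 / 12) - 1 / (2 * (k : ℝ)) ≤
      max ((2 * k : ℝ) / (2 * k - Γ))
        (((3 * k : ℝ) + Γ - (((k - Γ) % 2 : ℤ) : ℝ)) / (2 * k + 2 * Γ)) := by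
  set s := Real.sqrt 33 with hs_def
  have hs : s ^ 2 = 33 := Real.sq_sqrt (by norm_num)
  have hs5 : 5 ≤ s := by
    nlinarith [Real.sq_sqrt (show (0:ℝ) ≤ 33 by norm_num), Real.sqrt_nonneg 33]
  have hs6 : s ≤ 6 := by
    nlinarith [Real.sq_sqrt (show (0:ℝ) ≤ 33 by norm_num), Real.sqrt_nonneg 33]
  have hkR : (2:ℝ) ≤ (k:ℝ) := by exact_mod_cast hk
  have h0R : (0:ℝ) ≤ (Γ:ℝ) := by exact_mod_cast h0
  have hΓk : (Γ:ℝ) ≤ (k:ℝ) := by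
    have : Γ ≤ k := le_trans hΓ (Int.ediv_le_self 2 (by linarith))
    exact_mod_cast this
  have hp0 : (0:ℝ) ≤ (((k - Γ) % 2 : ℤ) : ℝ) := by
    have := Int.emod_nonneg (k - Γ) (by norm_num : (2:ℤ) ≠ 0)
    exact_mod_cast this
  have hp1 : (((k - Γ) % 2 : ℤ) : ℝ) ≤ 1 := by
    have := Int.emod_lt_of_pos (k - Γ) (by norm_num : (0:ℤ) < 2)
    have : (k - Γ) % 2 ≤ 1 := by omega
    exact_mod_cast this
  by_cases hc : (Γ:ℝ) * (3 + s) ≤ (k:ℝ) * (9 - s)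
  · -- second branch
    refine le_trans ?_ (le_max_right _ _)
    have hD : (0:ℝ) < 2 * (k:ℝ) + 2 * Γ := by linarith
    have h2k : (0:ℝ) < 2 * (k:ℝ) := by linarith
    have hstep : 1 / (2 * (k:ℝ) + 2 * Γ) ≤ 1 / (2 * (k:ℝ)) :=
      one_div_le_one_div_of_le h2k (by linarith)
    have hmain : (3 / 4 + s / 12) - 1 / (2 * (k:ℝ) + 2 * Γ) ≤
        ((3 * k : ℝ) + Γ - (((k - Γ) % 2 : ℤ) : ℝ)) / (2 * k + 2 * Γ) := by
      rw [sub_le_iff_le_add, ← add_div, le_div_iff₀ hD]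
      nlinarith [hs, hp1]
    linarith
  · -- first branch
    push_neg at hc
    refine le_trans ?_ (le_max_left _ _)
    have hD : (0:ℝ) < 2 * (k:ℝ) - Γ := by linarith
    have hgap : (s - 5) * (k:ℝ) < 2 * Γ := by
      nlinarith [hs, mul_pos (show (0:ℝ) < s - 3 by linarith)
        (show (0:ℝ) < (Γ:ℝ) * (3 + s) - (k:ℝ) * (9 - s) by linarith)]
    have hmain : (3 / 4 + s / 12) ≤ (2 * (k:ℝ)) / (2 * k - Γ) := by
      rw [le_div_iff₀ hD]
      nlinarith [hs, hgap, mul_nonneg (show (0:ℝ) ≤ s by linarith) (show (0:ℝ) ≤ 2*(Γ:ℝ) - (s-5)*k by linarith),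
        mul_nonneg (show (0:ℝ) ≤ s - 5 by linarith) h0R]
    have hpos : (0:ℝ) < 1 / (2 * (k:ℝ)) := by positivity
    linarith
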